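/- arXiv:math/0006014 — 4 statements merged into one kernel-verified Lean document; each statement's English description precedes it below -/
import Mathlib

section
/- Let K be a normal subgroup of a group G. Let ι: ℤ[K] → ℤ[G] be the ring homomorphism induced by the inclusion K ↪ G, and let J be the two-sided ideal of ℤ[G] generated by {k − 1 : k ∈ K}. Then for every d ≥ 1, the d-th power J^d equals the ℤ-submodule of ℤ[G] spanned by products x·y with x ∈ ℤ[G] and y ∈ ι(I(K)^d); this submodule moreover equals the ℤ-submodule spanned by products y·x with y ∈ ι(I(K)^d), x ∈ ℤ[G], and equals the ℤ-submodule spanned by products x·y·x′ with x, x′ ∈ ℤ[G] and y ∈ ι(I(K)^d). -/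
noncomputable section

/-- The augmentation homomorphism `ℤ[G] → ℤ` sending every group element to `1`. -/
def aug (G : Type*) [Group G] : MonoidAlgebra ℤ G →ₐ[ℤ] ℤ :=
  MonoidAlgebra.lift ℤ ℤ G 1

/-- The augmentation ideal `I(G)` of `ℤ[G]`, as a `ℤ`-submodule. -/
def augIdeal (G : Type*) [Group G] : Submodule ℤ (MonoidAlgebra ℤ G) :=
  (RingHom.ker (aug G).toRingHom).restrictScalars ℤ

/-- Powers of a `ℤ`-submodule of a `ℤ`-algebra, with the convention `N ^ 0 = ⊤`. -/
def spow {A : Type*} [Ring A] (N : Submodule ℤ A) : ℕ → Submodule ℤ A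
  | 0 => ⊤
  | d + 1 => N * spow N d

/-- The two-sided ideal of `ℤ[G]` generated by `{k - 1 : k ∈ K}`, as a `ℤ`-submodule. -/
def twoSidedAug {G : Type*} [Group G] (K : Subgroup G) : Submodule ℤ (MonoidAlgebra ℤ G) :=
  Submodule.span ℤ
    {x | ∃ (a b : MonoidAlgebra ℤ G) (k : G), k ∈ K ∧
      x = a * (MonoidAlgebra.of ℤ G k - 1) * b}

/-- The ring homomorphism `ℤ[K] → ℤ[G]` induced by the inclusion of a subgroup `K ↪ G`. -/
def iota {G : Type*} [Group G] (K : Subgroup G) :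
    MonoidAlgebra ℤ K →+* MonoidAlgebra ℤ G :=
  MonoidAlgebra.mapDomainRingHom ℤ K.subtype

open MonoidAlgebra Submodule

namespace Statement1Aux

variable {G : Type*} [Group G] (K : Subgroup G)

lemma aug_single (g : G) (c : ℤ) : aug G (single g c) = c := by
  simp [aug, MonoidAlgebra.lift_single]

lemma iota_single (k : K) (c : ℤ) : iota K (single k c) = single (k : G) c := by
  simp [iota, mapDomainRingHom, Finsupp.mapDomain_single]

lemma mem_augIdeal_iff (y : MonoidAlgebra ℤ K) : y ∈ augIdeal K ↔ aug K y = 0 := Iff.rfl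

/-- Conjugation by `g` as an algebra automorphism of `ℤ[K]`. -/
def conjAE (hK : K.Normal) (g : G) : MonoidAlgebra ℤ K ≃ₐ[ℤ] MonoidAlgebra ℤ K :=
  haveI := hK
  MonoidAlgebra.domCongr ℤ ℤ (MulAut.conjNormal g)

lemma conjAE_single (hK : K.Normal) (g : G) (k : K) (c : ℤ) :
    conjAE K hK g (single k c) =
      single (⟨g * k * g⁻¹, hK.conj_mem k k.2 g⟩ : K) c := by
  haveI := hK
  simp only [conjAE, MonoidAlgebra.domCongr_single]
  congr 1

lemma aug_conjAE (hK : K.Normal) (g : G) (y : MonoidAlgebra ℤ K) :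
    aug K (conjAE K hK g y) = aug K y := by
  induction y using MonoidAlgebra.induction_linear with
  | zero => simp
  | add a b ha hb => simp [map_add, ha, hb]
  | single k c => rw [conjAE_single]; simp [aug_single]

lemma iota_mul_of (hK : K.Normal) (g : G) (y : MonoidAlgebra ℤ K) :
    iota K y * MonoidAlgebra.of ℤ G g
      = MonoidAlgebra.of ℤ G g * iota K (conjAE K hK g⁻¹ y) := by
  induction y using MonoidAlgebra.induction_linear with
  | zero => simp
  | add a b ha hb => simp only [map_add, add_mul, mul_add, ha, hb]
  | single k c =>
      rw [conjAE_single, iota_single, iota_single]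
      simp only [MonoidAlgebra.of_apply, MonoidAlgebra.single_mul_single, one_mul, mul_one]
      congr 1
      group

lemma conjAE_conjAE_inv (hK : K.Normal) (g : G) (y : MonoidAlgebra ℤ K) :
    conjAE K hK g⁻¹ (conjAE K hK g y) = y := by
  induction y using MonoidAlgebra.induction_linear with
  | zero => simp
  | add a b ha hb => simp [map_add, ha, hb]
  | single k c =>
      rw [conjAE_single, conjAE_single]
      congr 1
      ext
      simp [mul_assoc]

lemma conjAE_mem_augIdeal (hK : K.Normal) (g : G) {y : MonoidAlgebra ℤ K}
    (hy : y ∈ augIdeal K) : conjAE K hK g y ∈ augIdeal K := by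
  rw [mem_augIdeal_iff] at hy ⊢
  rw [aug_conjAE]; exact hy

lemma conjAE_mem_spow (hK : K.Normal) (g : G) {d : ℕ} {y : MonoidAlgebra ℤ K}
    (hy : y ∈ spow (augIdeal K) d) : conjAE K hK g y ∈ spow (augIdeal K) d := by
  induction d generalizing y with
  | zero => exact Submodule.mem_top
  | succ d ih =>
      simp only [spow] at hy ⊢
      refine Submodule.mul_induction_on hy (fun u hu v hv => ?_) (fun a b ha hb => ?_)
      · rw [map_mul]
        exact Submodule.mul_mem_mul (conjAE_mem_augIdeal K hK g hu) (ih hv)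
      · rw [map_add]; exact add_mem ha hb

/-- The left span `span {x * ι y}`. -/
def LS (d : ℕ) : Submodule ℤ (MonoidAlgebra ℤ G) :=
  Submodule.span ℤ
    {z | ∃ (x : MonoidAlgebra ℤ G) (y : MonoidAlgebra ℤ K),
      y ∈ spow (augIdeal K) d ∧ z = x * iota K y}

lemma mul_mem_LS {d : ℕ} (x : MonoidAlgebra ℤ G) {z : MonoidAlgebra ℤ G}
    (hz : z ∈ LS K d) : x * z ∈ LS K d := by
  induction hz using Submodule.span_induction with
  | mem z hz =>
      obtain ⟨x', y, hy, rfl⟩ := hz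
      exact subset_span ⟨x * x', y, hy, (mul_assoc _ _ _).symm⟩
  | zero => simp
  | add a b _ _ ha hb => rw [mul_add]; exact add_mem ha hb
  | smul c a _ ha => rw [mul_smul_comm]; exact smul_mem _ c ha

lemma iota_mul_mem_span (hK : K.Normal) (N : Submodule ℤ (MonoidAlgebra ℤ K))
    (hN : ∀ g : G, ∀ y ∈ N, conjAE K hK g y ∈ N) {y : MonoidAlgebra ℤ K}
    (hy : y ∈ N) (x : MonoidAlgebra ℤ G) :
    iota K y * x ∈ Submodule.span ℤ
      {z | ∃ (x' : MonoidAlgebra ℤ G) (y' : MonoidAlgebra ℤ K),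
        y' ∈ N ∧ z = x' * iota K y'} := by
  induction x using MonoidAlgebra.induction_linear with
  | zero => simp
  | add a b ha hb => rw [mul_add]; exact add_mem ha hb
  | single g c =>
      have hs : (MonoidAlgebra.single g c : MonoidAlgebra ℤ G) = c • MonoidAlgebra.of ℤ G g := by
        simp [MonoidAlgebra.of_apply]
      rw [hs, mul_smul_comm, iota_mul_of K hK]
      exact smul_mem _ _ (subset_span ⟨_, _, hN g⁻¹ y hy, rfl⟩)

lemma iota_mul_mem_LS (hK : K.Normal) {d : ℕ} {y : MonoidAlgebra ℤ K}
    (hy : y ∈ spow (augIdeal K) d) (x : MonoidAlgebra ℤ G) :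
    iota K y * x ∈ LS K d :=
  iota_mul_mem_span K hK (spow (augIdeal K) d)
    (fun g y hy => conjAE_mem_spow K hK g hy) hy x

lemma LS_eq_RS (hK : K.Normal) (d : ℕ) :
    LS K d = Submodule.span ℤ
      {z | ∃ (x : MonoidAlgebra ℤ G) (y : MonoidAlgebra ℤ K),
        y ∈ spow (augIdeal K) d ∧ z = iota K y * x} := by
  apply le_antisymm
  · rw [LS, span_le]
    rintro z ⟨x, y, hy, rfl⟩
    -- x * ι y ∈ RS : write x as combination of group elements
    induction x using MonoidAlgebra.induction_linear with
    | zero => simp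
    | add a b ha hb => rw [add_mul]; exact add_mem ha hb
    | single g c =>
        have hs : (MonoidAlgebra.single g c : MonoidAlgebra ℤ G) = c • MonoidAlgebra.of ℤ G g := by
          simp [MonoidAlgebra.of_apply]
        have h := iota_mul_of K hK g (conjAE K hK g y)
        rw [conjAE_conjAE_inv K hK g y] at h
        rw [hs, smul_mul_assoc, ← h]
        exact smul_mem _ _
          (subset_span ⟨_, _, conjAE_mem_spow K hK g hy, rfl⟩)
  · rw [span_le]
    rintro z ⟨x, y, hy, rfl⟩
    exact iota_mul_mem_LS K hK hy x

lemma LS_eq_MS (hK : K.Normal) (d : ℕ) :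
    LS K d = Submodule.span ℤ
      {z | ∃ (x x' : MonoidAlgebra ℤ G) (y : MonoidAlgebra ℤ K),
        y ∈ spow (augIdeal K) d ∧ z = x * iota K y * x'} := by
  apply le_antisymm
  · rw [LS, span_le]
    rintro z ⟨x, y, hy, rfl⟩
    exact subset_span ⟨x, 1, y, hy, (mul_one _).symm⟩
  · rw [span_le]
    rintro z ⟨x, x', y, hy, rfl⟩
    have h := mul_mem_LS K x (iota_mul_mem_LS K hK hy x')
    rwa [← mul_assoc] at h

lemma of_sub_one_mem (k : K) : MonoidAlgebra.of ℤ K k - 1 ∈ augIdeal K := by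
  rw [mem_augIdeal_iff, map_sub, map_one, MonoidAlgebra.of_apply, aug_single, sub_self]

lemma augIdeal_eq_span :
    augIdeal K = Submodule.span ℤ {z | ∃ k : K, z = MonoidAlgebra.of ℤ K k - 1} := by
  apply le_antisymm
  · intro y hy
    have hy0 : aug K y = 0 := hy
    have hsum : aug K y = ∑ k ∈ y.coeff.support, y.coeff k := by
      conv_lhs => rw [← MonoidAlgebra.sum_single y]
      rw [Finsupp.sum, map_sum]
      exact Finset.sum_congr rfl fun k _ => aug_single k (y.coeff k)
    have hterm : ∀ k ∈ y.coeff.support,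
        y.coeff k • (MonoidAlgebra.of ℤ K k - 1 : MonoidAlgebra ℤ K)
          = single k (y.coeff k) - y.coeff k • (1 : MonoidAlgebra ℤ K) := by
      intro k _
      rw [smul_sub, MonoidAlgebra.of_apply, MonoidAlgebra.smul_single', mul_one]
    have hrepr : (∑ k ∈ y.coeff.support, y.coeff k • (MonoidAlgebra.of ℤ K k - 1)) = y := by
      rw [Finset.sum_congr rfl hterm, Finset.sum_sub_distrib, ← Finset.sum_smul,
        ← hsum, hy0, zero_smul, sub_zero]
      conv_rhs => rw [← MonoidAlgebra.sum_single y]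
      rfl
    rw [← hrepr]
    exact sum_mem fun k _ => smul_mem _ _ (subset_span ⟨k, rfl⟩)
  · rw [span_le]
    rintro z ⟨k, rfl⟩
    exact of_sub_one_mem K k

lemma spow_I_one : spow (augIdeal K) 1 = augIdeal K := by
  have h : spow (augIdeal K) 1 = augIdeal K * ⊤ := rfl
  rw [h]
  apply le_antisymm
  · refine Submodule.mul_le.2 fun a ha b _ => ?_
    rw [mem_augIdeal_iff] at ha ⊢
    rw [map_mul, ha, zero_mul]
  · intro a ha
    simpa using Submodule.mul_mem_mul ha (Submodule.mem_top (x := (1 : MonoidAlgebra ℤ K)))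

lemma twoSidedAug_mul_right {z : MonoidAlgebra ℤ G} (hz : z ∈ twoSidedAug K)
    (b : MonoidAlgebra ℤ G) : z * b ∈ twoSidedAug K := by
  induction hz using Submodule.span_induction with
  | mem z hz =>
      obtain ⟨a, b', k, hk, rfl⟩ := hz
      exact subset_span ⟨a, b' * b, k, hk, by rw [mul_assoc, mul_assoc]⟩
  | zero => simp
  | add u v _ _ hu hv => rw [add_mul]; exact add_mem hu hv
  | smul c u _ hu => rw [smul_mul_assoc]; exact smul_mem _ _ hu

lemma spow_J_one : spow (twoSidedAug K) 1 = twoSidedAug K := by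
  have h : spow (twoSidedAug K) 1 = twoSidedAug K * ⊤ := rfl
  rw [h]
  apply le_antisymm
  · exact Submodule.mul_le.2 fun a ha b _ => twoSidedAug_mul_right K ha b
  · intro a ha
    simpa using Submodule.mul_mem_mul ha (Submodule.mem_top (x := (1 : MonoidAlgebra ℤ G)))

lemma iota_of_sub_one (k : G) (hk : k ∈ K) :
    iota K (MonoidAlgebra.of ℤ K ⟨k, hk⟩ - 1) = MonoidAlgebra.of ℤ G k - 1 := by
  rw [map_sub, map_one, MonoidAlgebra.of_apply, iota_single, MonoidAlgebra.of_apply]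

lemma mul_iota_mem_J {u : MonoidAlgebra ℤ K} (hu : u ∈ augIdeal K)
    (x : MonoidAlgebra ℤ G) : x * iota K u ∈ twoSidedAug K := by
  rw [augIdeal_eq_span] at hu
  induction hu using Submodule.span_induction with
  | mem u hu =>
      obtain ⟨k, rfl⟩ := hu
      have h : iota K (MonoidAlgebra.of ℤ K k - 1) = MonoidAlgebra.of ℤ G (k : G) - 1 :=
        iota_of_sub_one K k k.2
      rw [h]
      exact subset_span ⟨x, 1, (k : G), k.2, (mul_one _).symm⟩
  | zero => simp
  | add u v _ _ hu hv => rw [map_add, mul_add]; exact add_mem hu hv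
  | smul c u _ hu => rw [map_zsmul, mul_smul_comm]; exact smul_mem _ _ hu

lemma aux2 (hK : K.Normal) {d : ℕ} {y : MonoidAlgebra ℤ K}
    (hy : y ∈ spow (augIdeal K) d) (a : MonoidAlgebra ℤ G) {v : MonoidAlgebra ℤ G}
    (hv : v ∈ Submodule.span ℤ
      {z | ∃ (x' : MonoidAlgebra ℤ G) (u' : MonoidAlgebra ℤ K),
        u' ∈ augIdeal K ∧ z = x' * iota K u'}) :
    a * v * iota K y ∈ LS K (d + 1) := by
  induction hv using Submodule.span_induction with
  | mem v hv =>
      obtain ⟨x', u', hu', rfl⟩ := hv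
      have hm : u' * y ∈ spow (augIdeal K) (d + 1) := by
        simp only [spow]
        exact Submodule.mul_mem_mul hu' hy
      have he : a * (x' * iota K u') * iota K y = (a * x') * iota K (u' * y) := by
        rw [map_mul]
        simp only [mul_assoc]
      rw [he]
      exact subset_span ⟨a * x', u' * y, hm, rfl⟩
  | zero => simp
  | add u v _ _ hu hv => rw [mul_add, add_mul]; exact add_mem hu hv
  | smul c u _ hu => rw [mul_smul_comm, smul_mul_assoc]; exact smul_mem _ _ hu

lemma gen_mul_mem (hK : K.Normal) {d : ℕ} (a b : MonoidAlgebra ℤ G) (k : G)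
    (hk : k ∈ K) {z : MonoidAlgebra ℤ G} (hz : z ∈ LS K d) :
    a * (MonoidAlgebra.of ℤ G k - 1) * b * z ∈ LS K (d + 1) := by
  induction hz using Submodule.span_induction with
  | mem z hz =>
      obtain ⟨x, y, hy, rfl⟩ := hz
      have hv : iota K (MonoidAlgebra.of ℤ K ⟨k, hk⟩ - 1) * (b * x)
          ∈ Submodule.span ℤ
            {z | ∃ (x' : MonoidAlgebra ℤ G) (u' : MonoidAlgebra ℤ K),
              u' ∈ augIdeal K ∧ z = x' * iota K u'} :=
        iota_mul_mem_span K hK (augIdeal K)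
          (fun g y hy => conjAE_mem_augIdeal K hK g hy) (of_sub_one_mem K ⟨k, hk⟩) (b * x)
      have h := aux2 K hK hy a hv
      have he : a * (iota K (MonoidAlgebra.of ℤ K ⟨k, hk⟩ - 1) * (b * x)) * iota K y
          = a * (MonoidAlgebra.of ℤ G k - 1) * b * (x * iota K y) := by
        rw [iota_of_sub_one K k hk]
        simp only [mul_assoc]
      rwa [he] at h
  | zero => simp
  | add u v _ _ hu hv => rw [mul_add]; exact add_mem hu hv
  | smul c u _ hu => rw [mul_smul_comm]; exact smul_mem _ _ hu

lemma main (hK : K.Normal) (d : ℕ) (hd : 1 ≤ d) :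
    spow (twoSidedAug K) d = LS K d := by
  induction d, hd using Nat.le_induction with
  | base =>
      rw [spow_J_one]
      apply le_antisymm
      · rw [twoSidedAug, span_le]
        rintro z ⟨a, b, k, hk, rfl⟩
        have hu : MonoidAlgebra.of ℤ K ⟨k, hk⟩ - 1 ∈ spow (augIdeal K) 1 := by
          rw [spow_I_one K]; exact of_sub_one_mem K ⟨k, hk⟩
        have h1 := mul_mem_LS K a (iota_mul_mem_LS K hK hu b)
        rw [← mul_assoc, iota_of_sub_one K k hk] at h1
        exact h1
      · rw [LS, span_le]
        rintro z ⟨x, y, hy, rfl⟩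
        rw [spow_I_one K] at hy
        exact mul_iota_mem_J K hy x
  | succ d hd ih =>
      have hstep : spow (twoSidedAug K) (d + 1) = twoSidedAug K * LS K d := by
        simp only [spow]
        rw [← ih]
      rw [hstep]
      apply le_antisymm
      · refine Submodule.mul_le.2 fun j hj z hz => ?_
        induction hj using Submodule.span_induction with
        | mem j hj =>
            obtain ⟨a, b, k, hk, rfl⟩ := hj
            exact gen_mul_mem K hK a b k hk hz
        | zero => simp
        | add u v _ _ hu hv => rw [add_mul]; exact add_mem hu hv
        | smul c u _ hu => rw [smul_mul_assoc]; exact smul_mem _ _ hu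
      · rw [LS, span_le]
        rintro z ⟨x, y, hy, rfl⟩
        simp only [spow] at hy
        refine Submodule.mul_induction_on hy (fun u hu v hv => ?_) (fun p q hp hq => ?_)
        · rw [map_mul, ← mul_assoc]
          exact Submodule.mul_mem_mul (mul_iota_mem_J K hu x)
            (subset_span ⟨1, v, hv, (one_mul _).symm⟩)
        · rw [map_add, mul_add]; exact add_mem hp hq

end Statement1Aux

/-- If `K` is a normal subgroup of `G` and `J` is the two-sided ideal of
`ℤ[G]` generated by `{k - 1 : k ∈ K}`, then for every `d ≥ 1` the power `J ^ d` equals the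
`ℤ`-span of the products `x * ι(y)` with `y ∈ I(K)^d`, which also equals the `ℤ`-span of the
products `ι(y) * x`, and the `ℤ`-span of the products `x * ι(y) * x'`. -/
theorem statement1 {G : Type*} [Group G] (K : Subgroup G) (hK : K.Normal)
    (d : ℕ) (hd : 1 ≤ d) :
    spow (twoSidedAug K) d =
      Submodule.span ℤ
        {z | ∃ (x : MonoidAlgebra ℤ G) (y : MonoidAlgebra ℤ K),
          y ∈ spow (augIdeal K) d ∧ z = x * iota K y} ∧
    spow (twoSidedAug K) d =
      Submodule.span ℤ
        {z | ∃ (x : MonoidAlgebra ℤ G) (y : MonoidAlgebra ℤ K),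
          y ∈ spow (augIdeal K) d ∧ z = iota K y * x} ∧
    spow (twoSidedAug K) d =
      Submodule.span ℤ
        {z | ∃ (x x' : MonoidAlgebra ℤ G) (y : MonoidAlgebra ℤ K),
          y ∈ spow (augIdeal K) d ∧ z = x * iota K y * x'} := by
  have h := Statement1Aux.main K hK d hd
  exact ⟨h, h.trans (Statement1Aux.LS_eq_RS K hK d),
    h.trans (Statement1Aux.LS_eq_MS K hK d)⟩
end
end

section
/- Fix a group Γ and an integer n ≥ 3, and let ρ̃_n: L_n(Γ) → L_{n−1}(Γ) be the Lie algebra homomorphism determined by ρ̃_n(t_{1,j,γ}) = 0 for 2 ≤ j ≤ n and ρ̃_n(t_{i,j,γ}) = t_{i−1,j−1,γ} for i, j ∈ {2,…,n}, i ≠ j. Then the kernel of ρ̃_n equals the Lie subalgebra of L_n(Γ) generated by the set {t_{1,j,γ} : 2 ≤ j ≤ n, γ ∈ Γ}. -/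
noncomputable section

/-- Index type for the generators `t_{i,j,γ}`: pairs of distinct indices together with a
group element label. -/
def Idx (n : ℕ) (Γ : Type*) : Type _ := {p : Fin n × Fin n × Γ // p.1 ≠ p.2.1}

/-- The generator `t_{i,j,γ}` of the free Lie algebra. -/
def flGen (n : ℕ) (Γ : Type*) (i j : Fin n) (γ : Γ) (h : i ≠ j) :
    FreeLieAlgebra ℤ (Idx n Γ) :=
  FreeLieAlgebra.of ℤ ⟨(i, j, γ), h⟩

/-- The set of relators (L1), (L2), (L3) defining `L_n(Γ)`. -/
def lieRels (n : ℕ) (Γ : Type*) [Group Γ] : Set (FreeLieAlgebra ℤ (Idx n Γ)) :=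
  {x | ∃ (i j : Fin n) (γ : Γ) (h : i ≠ j),
      x = flGen n Γ i j γ h - flGen n Γ j i γ⁻¹ h.symm} ∪
  {x | ∃ (i j k l : Fin n) (γ δ : Γ) (hij : i ≠ j) (hkl : k ≠ l),
      i ≠ k ∧ i ≠ l ∧ j ≠ k ∧ j ≠ l ∧
      x = ⁅flGen n Γ i j γ hij, flGen n Γ k l δ hkl⁆} ∪
  {x | ∃ (i j k : Fin n) (γ δ : Γ) (hij : i ≠ j) (hjk : j ≠ k) (hik : i ≠ k),
      x = ⁅flGen n Γ i j γ hij, flGen n Γ j k δ hjk + flGen n Γ i k (γ * δ) hik⁆}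

/-- The Lie ideal generated by the relators. -/
def lieRelIdeal (n : ℕ) (Γ : Type*) [Group Γ] :
    LieIdeal ℤ (FreeLieAlgebra ℤ (Idx n Γ)) :=
  LieSubmodule.lieSpan ℤ (FreeLieAlgebra ℤ (Idx n Γ)) (lieRels n Γ)

/-- The Lie algebra `L_n(Γ)` over `ℤ`. -/
abbrev Ln (n : ℕ) (Γ : Type*) [Group Γ] :=
  FreeLieAlgebra ℤ (Idx n Γ) ⧸ lieRelIdeal n Γ

/-- The generator `t_{i,j,γ}` of `L_n(Γ)`. -/
def tL (n : ℕ) (Γ : Type*) [Group Γ] (i j : Fin n) (γ : Γ) (h : i ≠ j) : Ln n Γ :=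
  LieSubmodule.Quotient.mk' (lieRelIdeal n Γ) (flGen n Γ i j γ h)


-- AUX START
namespace Stmt8

open FreeLieAlgebra LieSubalgebra

variable {Γ : Type*} [Group Γ] {n : ℕ}

lemma mk_rel_zero {x : FreeLieAlgebra ℤ (Idx n Γ)} (hx : x ∈ lieRels n Γ) :
    LieSubmodule.Quotient.mk' (lieRelIdeal n Γ) x = 0 :=
  (LieSubmodule.Quotient.mk_eq_zero _).2 (LieSubmodule.subset_lieSpan hx)

lemma mk_bracket (a b : FreeLieAlgebra ℤ (Idx n Γ)) :
    LieSubmodule.Quotient.mk' (lieRelIdeal n Γ) ⁅a, b⁆ =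
      ⁅LieSubmodule.Quotient.mk' (lieRelIdeal n Γ) a,
        LieSubmodule.Quotient.mk' (lieRelIdeal n Γ) b⁆ := rfl

lemma tL_symm (i j : Fin n) (γ : Γ) (h : i ≠ j) :
    tL n Γ i j γ h = tL n Γ j i γ⁻¹ h.symm := by
  have := mk_rel_zero (n := n) (Γ := Γ) (Or.inl (Or.inl ⟨i, j, γ, h, rfl⟩))
  rw [map_sub] at this
  exact sub_eq_zero.mp this

lemma tL_comm (i j k l : Fin n) (γ δ : Γ) (hij : i ≠ j) (hkl : k ≠ l)
    (hik : i ≠ k) (hil : i ≠ l) (hjk : j ≠ k) (hjl : j ≠ l) :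
    ⁅tL n Γ i j γ hij, tL n Γ k l δ hkl⁆ = 0 := by
  have := mk_rel_zero (n := n) (Γ := Γ)
    (Or.inl (Or.inr ⟨i, j, k, l, γ, δ, hij, hkl, hik, hil, hjk, hjl, rfl⟩))
  rwa [mk_bracket] at this

lemma tL_rel3 (i j k : Fin n) (γ δ : Γ) (hij : i ≠ j) (hjk : j ≠ k) (hik : i ≠ k) :
    ⁅tL n Γ i j γ hij, tL n Γ j k δ hjk⁆ = -⁅tL n Γ i j γ hij, tL n Γ i k (γ * δ) hik⁆ := by
  have := mk_rel_zero (n := n) (Γ := Γ)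
    (Or.inr ⟨i, j, k, γ, δ, hij, hjk, hik, rfl⟩)
  rw [mk_bracket, map_add] at this
  rw [lie_add] at this
  exact eq_neg_of_add_eq_zero_left this

lemma freeLie_mem_span {X : Type*} (x : FreeLieAlgebra ℤ X) :
    x ∈ lieSpan ℤ (FreeLieAlgebra ℤ X) (Set.range (of ℤ (X := X))) := by
  set P := lieSpan ℤ (FreeLieAlgebra ℤ X) (Set.range (of ℤ (X := X))) with hP
  let g : FreeLieAlgebra ℤ X →ₗ⁅ℤ⁆ P :=
    lift ℤ fun i => (⟨of ℤ i, subset_lieSpan (Set.mem_range_self i)⟩ : P)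
  have key : P.incl.comp g = LieHom.id := by
    apply hom_ext
    intro i
    exact congrArg Subtype.val (lift_of_apply (R := ℤ) _ i)
  have : P.incl (g x) = x := by
    have := congrArg (fun F => F x) (congrArg (fun h => h.toFun) key)
    simpa using this
  rw [← this]
  exact (g x).2

lemma lieSpan_induction_old {R L : Type*} [CommRing R] [LieRing L] [LieAlgebra R L]
    {s : Set L} {p : L → Prop} {x : L} (h : x ∈ lieSpan R L s) (mem : ∀ x ∈ s, p x)
    (zero : p 0) (smul : ∀ (r : R) {x : L}, p x → p (r • x))
    (add : ∀ x y, p x → p y → p (x + y)) (lie : ∀ x y, p x → p y → p ⁅x, y⁆) : p x :=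
  lieSpan_induction (p := fun x _ => p x) (mem := fun x hx => mem x hx) (zero := zero)
    (add := fun x y _ _ => add x y) (smul := fun r _ _ => smul r)
    (lie := fun x y _ _ => lie x y) (hx := h)

lemma Ln_gen (x : Ln n Γ) :
    x ∈ lieSpan ℤ (Ln n Γ)
      {y | ∃ (i j : Fin n) (γ : Γ) (h : i ≠ j), y = tL n Γ i j γ h} := by
  obtain ⟨z, rfl⟩ := LieSubmodule.Quotient.surjective_mk' (lieRelIdeal n Γ) x
  refine lieSpan_induction_old (R := ℤ) (p := fun w => LieSubmodule.Quotient.mk' (lieRelIdeal n Γ) w ∈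
      lieSpan ℤ (Ln n Γ) {y | ∃ (i j : Fin n) (γ : Γ) (h : i ≠ j), y = tL n Γ i j γ h})
    (freeLie_mem_span z) ?_ ?_ ?_ ?_ ?_
  · rintro w ⟨⟨⟨i, j, γ⟩, h⟩, rfl⟩
    exact subset_lieSpan ⟨i, j, γ, h, rfl⟩
  · simp only [map_zero]; exact (lieSpan ℤ _ _).zero_mem
  · intro r x hx; rw [map_smul]; exact (lieSpan ℤ _ _).smul_mem r hx
  · intro x y hx hy; rw [map_add]; exact (lieSpan ℤ _ _).add_mem hx hy
  · intro x y hx hy; rw [mk_bracket]; exact (lieSpan ℤ _ _).lie_mem hx hy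

variable (Γ) in
/-- The free lift of the shift map. -/
def Fσ (m : ℕ) : FreeLieAlgebra ℤ (Idx m Γ) →ₗ⁅ℤ⁆ Ln (m + 1) Γ :=
  lift ℤ fun p => tL (m + 1) Γ p.1.1.succ p.1.2.1.succ p.1.2.2
    (fun h => p.2 (Fin.succ_injective m h))

lemma Fσ_flGen (m : ℕ) (i j : Fin m) (γ : Γ) (h : i ≠ j) :
    Fσ Γ m (flGen m Γ i j γ h) = tL (m + 1) Γ i.succ j.succ γ
      (fun hc => h (Fin.succ_injective m hc)) :=
  lift_of_apply _ _

lemma rels_le_kerFσ (m : ℕ) : lieRelIdeal m Γ ≤ (Fσ Γ m).ker := by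
  rw [lieRelIdeal, LieSubmodule.lieSpan_le]
  rintro x (((⟨i, j, γ, h, rfl⟩ | ⟨i, j, k, l, γ, δ, hij, hkl, hik, hil, hjk, hjl, rfl⟩) |
    ⟨i, j, k, γ, δ, hij, hjk, hik, rfl⟩))
  · rw [SetLike.mem_coe, LieHom.mem_ker, map_sub, Fσ_flGen, Fσ_flGen, sub_eq_zero]
    exact tL_symm _ _ _ _
  · rw [SetLike.mem_coe, LieHom.mem_ker, LieHom.map_lie, Fσ_flGen, Fσ_flGen]
    exact tL_comm _ _ _ _ _ _ _ _
      (fun hc => hik (Fin.succ_injective m hc)) (fun hc => hil (Fin.succ_injective m hc))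
      (fun hc => hjk (Fin.succ_injective m hc)) (fun hc => hjl (Fin.succ_injective m hc))
  · rw [SetLike.mem_coe, LieHom.mem_ker, LieHom.map_lie, map_add,
      Fσ_flGen, Fσ_flGen, Fσ_flGen, lie_add, tL_rel3 _ _ _ _ _ _ _
        (fun hc => hik (Fin.succ_injective m hc))]
    exact neg_add_cancel _

variable (Γ) in
/-- The section `σ : L_m(Γ) → L_{m+1}(Γ)`. -/
def σL (m : ℕ) : Ln m Γ →ₗ⁅ℤ⁆ Ln (m + 1) Γ :=
  { (lieRelIdeal m Γ).toSubmodule.liftQ (Fσ Γ m).toLinearMap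
      (show (lieRelIdeal m Γ).toSubmodule ≤ LinearMap.ker (Fσ Γ m).toLinearMap from
        fun x hx => rels_le_kerFσ m hx) with
    map_lie' := by
      rintro ⟨x⟩ ⟨y⟩
      show ((lieRelIdeal m Γ).toSubmodule.liftQ (Fσ Γ m).toLinearMap _)
          (LieSubmodule.Quotient.mk' (lieRelIdeal m Γ) ⁅x, y⁆) = _
      rw [show (LieSubmodule.Quotient.mk' (lieRelIdeal m Γ) ⁅x, y⁆ : Ln m Γ) =
        Submodule.Quotient.mk ⁅x, y⁆ from rfl, Submodule.liftQ_apply]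
      show Fσ Γ m ⁅x, y⁆ = ⁅((lieRelIdeal m Γ).toSubmodule.liftQ (Fσ Γ m).toLinearMap _)
          (Submodule.Quotient.mk x), ((lieRelIdeal m Γ).toSubmodule.liftQ
          (Fσ Γ m).toLinearMap _) (Submodule.Quotient.mk y)⁆
      rw [Submodule.liftQ_apply, Submodule.liftQ_apply, LieHom.map_lie]
      rfl }

lemma σL_tL (m : ℕ) (i j : Fin m) (γ : Γ) (h : i ≠ j) :
    σL Γ m (tL m Γ i j γ h) = tL (m + 1) Γ i.succ j.succ γ
      (fun hc => h (Fin.succ_injective m hc)) := by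
  show ((lieRelIdeal m Γ).toSubmodule.liftQ (Fσ Γ m).toLinearMap _)
      (Submodule.Quotient.mk (flGen m Γ i j γ h)) = _
  rw [Submodule.liftQ_apply]
  exact Fσ_flGen m i j γ h


variable (Γ) in
def genSet (m : ℕ) : Set (Ln (m + 1) Γ) :=
  {y | ∃ (j : Fin (m + 1)) (hj : (0 : Fin (m + 1)) ≠ j) (γ : Γ), y = tL (m + 1) Γ 0 j γ hj}

lemma gen_bracket_mem (m : ℕ) (i j : Fin (m + 1)) (hij : i ≠ j) (γ : Γ) :
    ∀ k ∈ lieSpan ℤ (Ln (m + 1) Γ) (genSet Γ m),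
      ⁅tL (m + 1) Γ i j γ hij, k⁆ ∈ lieSpan ℤ (Ln (m + 1) Γ) (genSet Γ m) := by
  set K := lieSpan ℤ (Ln (m + 1) Γ) (genSet Γ m) with hK
  intro k hk
  refine (lieSpan_induction_old (R := ℤ)
    (p := fun w => w ∈ K ∧ ⁅tL (m + 1) Γ i j γ hij, w⁆ ∈ K) hk ?_ ?_ ?_ ?_ ?_).2
  · rintro w ⟨l, hl, δ, rfl⟩
    refine ⟨subset_lieSpan ⟨l, hl, δ, rfl⟩, ?_⟩
    by_cases hi0 : i = 0
    · subst hi0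
      exact K.lie_mem (subset_lieSpan ⟨j, hij, γ, rfl⟩) (subset_lieSpan ⟨l, hl, δ, rfl⟩)
    by_cases hj0 : j = 0
    · subst hj0
      rw [tL_symm]
      exact K.lie_mem (subset_lieSpan ⟨i, hij.symm, γ⁻¹, rfl⟩)
        (subset_lieSpan ⟨l, hl, δ, rfl⟩)
    have h0i : (0 : Fin (m + 1)) ≠ i := fun hc => hi0 hc.symm
    have h0j : (0 : Fin (m + 1)) ≠ j := fun hc => hj0 hc.symm
    by_cases hli : l = i
    · subst hli
      have h1 := tL_rel3 0 l j δ γ hl hij h0j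
      rw [← lie_skew, h1, neg_neg]
      exact K.lie_mem (subset_lieSpan ⟨l, hl, δ, rfl⟩)
        (subset_lieSpan ⟨j, h0j, δ * γ, rfl⟩)
    by_cases hlj : l = j
    · subst hlj
      rw [tL_symm, ← lie_skew]
      have h1 := tL_rel3 0 l i δ γ⁻¹ hl hij.symm h0i
      rw [h1, neg_neg]
      exact K.lie_mem (subset_lieSpan ⟨l, hl, δ, rfl⟩)
        (subset_lieSpan ⟨i, h0i, δ * γ⁻¹, rfl⟩)
    · rw [tL_comm i j 0 l γ δ hij hl hi0 (fun hc => hli hc.symm) hj0 (fun hc => hlj hc.symm)]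
      exact K.zero_mem
  · exact ⟨K.zero_mem, by rw [lie_zero]; exact K.zero_mem⟩
  · rintro r x ⟨h1, h2⟩; exact ⟨K.smul_mem r h1, by rw [lie_smul]; exact K.smul_mem r h2⟩
  · rintro x y ⟨hx1, hx2⟩ ⟨hy1, hy2⟩
    exact ⟨K.add_mem hx1 hy1, by rw [lie_add]; exact K.add_mem hx2 hy2⟩
  · rintro x y ⟨hx1, hx2⟩ ⟨hy1, hy2⟩
    refine ⟨K.lie_mem hx1 hy1, ?_⟩
    rw [leibniz_lie]
    exact K.add_mem (K.lie_mem hx2 hy1) (K.lie_mem hx1 hy2)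

lemma bracket_mem (m : ℕ) (x k : Ln (m + 1) Γ)
    (hk : k ∈ lieSpan ℤ (Ln (m + 1) Γ) (genSet Γ m)) :
    ⁅x, k⁆ ∈ lieSpan ℤ (Ln (m + 1) Γ) (genSet Γ m) := by
  set K := lieSpan ℤ (Ln (m + 1) Γ) (genSet Γ m) with hK
  refine lieSpan_induction_old (R := ℤ) (p := fun w => ∀ k ∈ K, ⁅w, k⁆ ∈ K)
    (Ln_gen x) ?_ ?_ ?_ ?_ ?_ k hk
  · rintro w ⟨i, j, γ, h, rfl⟩
    exact gen_bracket_mem m i j h γ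
  · intro k hk; rw [zero_lie]; exact K.zero_mem
  · intro r x hx k hk; rw [smul_lie]; exact K.smul_mem r (hx k hk)
  · intro x y hx hy k hk; rw [add_lie]; exact K.add_mem (hx k hk) (hy k hk)
  · intro x y hx hy k hk
    rw [lie_lie]
    exact K.sub_mem (hx _ (hy k hk)) (hy _ (hx k hk))

end Stmt8

set_option linter.unusedVariables false in
/-- For `n = m + 1 ≥ 3`, if `ρ̃ : L_n(Γ) → L_{n-1}(Γ)` is the Lie algebra
homomorphism determined by `ρ̃(t_{1,j,γ}) = 0` and `ρ̃(t_{i,j,γ}) = t_{i-1,j-1,γ}` for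
`i, j ≥ 2`, then its kernel equals the Lie subalgebra of `L_n(Γ)` generated by the set
`{t_{1,j,γ} : 2 ≤ j ≤ n, γ ∈ Γ}`. -/
theorem statement8 (Γ : Type*) [Group Γ] (m : ℕ) (hm : 2 ≤ m)
    (ρ : Ln (m + 1) Γ →ₗ⁅ℤ⁆ Ln m Γ)
    (hρ0 : ∀ (j : Fin (m + 1)) (hj : (0 : Fin (m + 1)) ≠ j) (γ : Γ),
      ρ (tL (m + 1) Γ 0 j γ hj) = 0)
    (hρsucc : ∀ (i j : Fin m) (hij : i ≠ j) (γ : Γ),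
      ρ (tL (m + 1) Γ i.succ j.succ γ (fun h => hij (Fin.succ_injective m h))) =
        tL m Γ i j γ hij) :
    ∀ x : Ln (m + 1) Γ,
      x ∈ ρ.ker ↔
        x ∈ LieSubalgebra.lieSpan ℤ (Ln (m + 1) Γ)
          {y | ∃ (j : Fin (m + 1)) (hj : (0 : Fin (m + 1)) ≠ j) (γ : Γ),
            y = tL (m + 1) Γ 0 j γ hj} := by
  open Stmt8 LieSubalgebra in
  intro x
  show x ∈ ρ.ker ↔ x ∈ lieSpan ℤ (Ln (m + 1) Γ) (Stmt8.genSet Γ m)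
  set K := lieSpan ℤ (Ln (m + 1) Γ) (Stmt8.genSet Γ m) with hK
  constructor
  · intro hx
    rw [LieHom.mem_ker] at hx
    have key : ∀ z : Ln (m + 1) Γ, z - Stmt8.σL Γ m (ρ z) ∈ K := by
      intro z
      refine lieSpan_induction_old (R := ℤ) (p := fun w => w - Stmt8.σL Γ m (ρ w) ∈ K)
        (Stmt8.Ln_gen z) ?_ ?_ ?_ ?_ ?_
      · rintro w ⟨i, j, γ, h, rfl⟩
        rcases Fin.eq_zero_or_eq_succ i with hi | ⟨i', rfl⟩
        · subst hi
          rw [hρ0 j h γ, map_zero, sub_zero]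
          exact subset_lieSpan ⟨j, h, γ, rfl⟩
        rcases Fin.eq_zero_or_eq_succ j with hj | ⟨j', rfl⟩
        · subst hj
          rw [Stmt8.tL_symm i'.succ 0 γ h, hρ0 i'.succ h.symm γ⁻¹, map_zero, sub_zero]
          exact subset_lieSpan ⟨i'.succ, h.symm, γ⁻¹, rfl⟩
        · have hij : i' ≠ j' := fun hc => h (by rw [hc])
          have e1 : tL (m + 1) Γ i'.succ j'.succ γ h =
              tL (m + 1) Γ i'.succ j'.succ γ (fun hc => hij (Fin.succ_injective m hc)) := rfl
          rw [e1, hρsucc i' j' hij γ, Stmt8.σL_tL m i' j' γ hij, sub_self]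
          exact K.zero_mem
      · simp only [map_zero, sub_zero]; exact K.zero_mem
      · intro r w hw
        have : r • w - Stmt8.σL Γ m (ρ (r • w)) = r • (w - Stmt8.σL Γ m (ρ w)) := by
          rw [map_smul, map_smul, smul_sub]
        rw [this]; exact K.smul_mem r hw
      · intro a b ha hb
        have : a + b - Stmt8.σL Γ m (ρ (a + b)) =
            (a - Stmt8.σL Γ m (ρ a)) + (b - Stmt8.σL Γ m (ρ b)) := by
          rw [map_add, map_add]; abel
        rw [this]; exact K.add_mem ha hb
      · intro a b ha hb
        have : ⁅a, b⁆ - Stmt8.σL Γ m (ρ ⁅a, b⁆) =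
            ⁅a - Stmt8.σL Γ m (ρ a), b⁆ + ⁅Stmt8.σL Γ m (ρ a), b - Stmt8.σL Γ m (ρ b)⁆ := by
          rw [LieHom.map_lie, LieHom.map_lie, sub_lie, lie_sub]; abel
        rw [this]
        refine K.add_mem ?_ (Stmt8.bracket_mem m _ _ hb)
        rw [← lie_skew]
        exact K.neg_mem (Stmt8.bracket_mem m _ _ ha)
    have h2 := key x
    rwa [hx, map_zero, sub_zero] at h2
  · intro hx
    rw [LieHom.mem_ker]
    refine lieSpan_induction_old (R := ℤ) (p := fun w => ρ w = 0) hx ?_ ?_ ?_ ?_ ?_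
    · rintro w ⟨j, hj, γ, rfl⟩; exact hρ0 j hj γ
    · exact map_zero ρ
    · intro r w hw; rw [map_smul, hw, smul_zero]
    · intro a b ha hb; rw [map_add, ha, hb, add_zero]
    · intro a b ha hb; rw [LieHom.map_lie, ha, zero_lie]
end
end

section
/- Fix a group Γ and an integer n ≥ 2. The ℤ-algebra A_n(Γ) is spanned as a ℤ-module by the images of the monomials t_{i_1,j_1,γ_1}·t_{i_2,j_2,γ_2}⋯t_{i_d,j_d,γ_d} with d ≥ 0 (the empty product being 1), where 1 ≤ i_k < j_k ≤ n and γ_k ∈ Γ for each k, and i_1 ≤ i_2 ≤ ⋯ ≤ i_d. -/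
noncomputable section

/-- The generator `t_{i,j,γ}` of the free associative `ℤ`-algebra. -/
def faGen (n : ℕ) (Γ : Type*) (i j : Fin n) (γ : Γ) (h : i ≠ j) :
    FreeAlgebra ℤ (Idx n Γ) :=
  FreeAlgebra.ι ℤ ⟨(i, j, γ), h⟩

/-- The relations (A0), (A1), (A2) defining `A_n(Γ)`. -/
inductive ARel (n : ℕ) (Γ : Type*) [Group Γ] :
    FreeAlgebra ℤ (Idx n Γ) → FreeAlgebra ℤ (Idx n Γ) → Prop
  | inv : ∀ (i j : Fin n) (γ : Γ) (h : i ≠ j),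
      ARel n Γ (faGen n Γ i j γ h) (faGen n Γ j i γ⁻¹ h.symm)
  | comm : ∀ (i j k l : Fin n) (γ δ : Γ) (hij : i ≠ j) (hkl : k ≠ l),
      i ≠ k → i ≠ l → j ≠ k → j ≠ l →
      ARel n Γ (faGen n Γ i j γ hij * faGen n Γ k l δ hkl)
               (faGen n Γ k l δ hkl * faGen n Γ i j γ hij)
  | inf : ∀ (i j k : Fin n) (γ δ : Γ) (hij : i ≠ j) (hjk : j ≠ k) (hik : i ≠ k),
      ARel n Γ (faGen n Γ i j γ hij * (faGen n Γ j k δ hjk + faGen n Γ i k (γ * δ) hik))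
               ((faGen n Γ j k δ hjk + faGen n Γ i k (γ * δ) hik) * faGen n Γ i j γ hij)

/-- The associative unital `ℤ`-algebra `A_n(Γ)`: the quotient of the free `ℤ`-algebra on the
symbols `t_{i,j,γ}` by the two-sided ideal generated by the relations (A0), (A1), (A2). -/
abbrev An (n : ℕ) (Γ : Type*) [Group Γ] := RingQuot (ARel n Γ)

/-- The generator `t_{i,j,γ}` of `A_n(Γ)`. -/
def tA (n : ℕ) (Γ : Type*) [Group Γ] (i j : Fin n) (γ : Γ) (h : i ≠ j) : An n Γ :=
  RingQuot.mkAlgHom ℤ (ARel n Γ) (faGen n Γ i j γ h)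


namespace St9

variable (n : ℕ) (Γ : Type*) [Group Γ]

/-- pairs with `i < j` plus a label -/
abbrev Pa := {p : Fin n × Fin n × Γ // p.1 < p.2.1}

def gg (p : Pa n Γ) : An n Γ := tA n Γ p.val.1 p.val.2.1 p.val.2.2 p.prop.ne

def listProd (L : List (Pa n Γ)) : An n Γ := (L.map (gg n Γ)).prod

def Srt (L : List (Pa n Γ)) : Prop := (L.map (fun p => p.val.1)).Pairwise (· ≤ ·)

/-- span of sorted monomials with all first indices `≥ c` -/
def spanS (c : Fin n) : Submodule ℤ (An n Γ) :=
  Submodule.span ℤ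
    {x | ∃ M : List (Pa n Γ), Srt n Γ M ∧ (∀ q ∈ M, c ≤ q.val.1) ∧ x = listProd n Γ M}

variable {n Γ}

lemma rel0 (i j : Fin n) (γ : Γ) (h : i ≠ j) : tA n Γ i j γ h = tA n Γ j i γ⁻¹ h.symm :=
  RingQuot.mkAlgHom_rel ℤ (ARel.inv i j γ h)

lemma rel1 (i j k l : Fin n) (γ δ : Γ) (hij : i ≠ j) (hkl : k ≠ l)
    (hik : i ≠ k) (hil : i ≠ l) (hjk : j ≠ k) (hjl : j ≠ l) :
    tA n Γ i j γ hij * tA n Γ k l δ hkl = tA n Γ k l δ hkl * tA n Γ i j γ hij := by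
  have := RingQuot.mkAlgHom_rel ℤ (ARel.comm i j k l γ δ hij hkl hik hil hjk hjl)
  simpa only [tA, map_mul] using this

lemma rel2 (i j k : Fin n) (γ δ : Γ) (hij : i ≠ j) (hjk : j ≠ k) (hik : i ≠ k) :
    tA n Γ i j γ hij * (tA n Γ j k δ hjk + tA n Γ i k (γ * δ) hik)
      = (tA n Γ j k δ hjk + tA n Γ i k (γ * δ) hik) * tA n Γ i j γ hij := by
  have := RingQuot.mkAlgHom_rel ℤ (ARel.inf i j k γ δ hij hjk hik)
  simpa only [tA, map_mul, map_add] using this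

/-- reorder `t_{j,k} t_{i,j}` -/
lemma swapA (i j k : Fin n) (γ δ : Γ) (hij : i ≠ j) (hjk : j ≠ k) (hik : i ≠ k) :
    tA n Γ j k δ hjk * tA n Γ i j γ hij =
      tA n Γ i j γ hij * tA n Γ j k δ hjk + tA n Γ i j γ hij * tA n Γ i k (γ * δ) hik
        - tA n Γ i k (γ * δ) hik * tA n Γ i j γ hij := by
  have h := rel2 i j k γ δ hij hjk hik
  rw [mul_add, add_mul] at h
  rw [eq_sub_iff_add_eq]
  exact h.symm

/-- reorder `t_{a,j} t_{i,j}` -/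
lemma swapB (i a j : Fin n) (γ δ : Γ) (hia : i ≠ a) (haj : a ≠ j) (hij : i ≠ j) :
    tA n Γ a j γ haj * tA n Γ i j δ hij =
      tA n Γ i j δ hij * tA n Γ a j γ haj
        + tA n Γ i a (δ * γ⁻¹) hia * tA n Γ a j γ haj
        - tA n Γ a j γ haj * tA n Γ i a (δ * γ⁻¹) hia := by
  have h := rel2 a j i γ δ⁻¹ haj (Ne.symm hij) (Ne.symm hia)
  rw [mul_add, add_mul] at h
  have e1 : tA n Γ j i δ⁻¹ (Ne.symm hij) = tA n Γ i j δ hij := by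
    rw [rel0 i j δ hij]
  have e2 : tA n Γ a i (γ * δ⁻¹) (Ne.symm hia) = tA n Γ i a (δ * γ⁻¹) hia := by
    rw [rel0 i a (δ * γ⁻¹) hia]
    congr 1
    group
  rw [e1, e2] at h
  rw [eq_sub_iff_add_eq]
  exact h

end St9

namespace St9

variable {n : ℕ} {Γ : Type*} [Group Γ]

lemma listProd_nil : listProd n Γ [] = 1 := rfl

lemma listProd_cons (p : Pa n Γ) (L : List (Pa n Γ)) :
    listProd n Γ (p :: L) = gg n Γ p * listProd n Γ L := by
  simp [listProd]

lemma srt_cons {p : Pa n Γ} {M : List (Pa n Γ)} (hp : ∀ q ∈ M, p.val.1 ≤ q.val.1)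
    (hs : Srt n Γ M) : Srt n Γ (p :: M) := by
  rw [Srt, List.map_cons, List.pairwise_cons]
  refine ⟨?_, hs⟩
  simpa using hp

lemma srt_tail {p : Pa n Γ} {M : List (Pa n Γ)} (hs : Srt n Γ (p :: M)) :
    Srt n Γ M ∧ ∀ q ∈ M, p.val.1 ≤ q.val.1 := by
  rw [Srt, List.map_cons, List.pairwise_cons] at hs
  refine ⟨hs.2, fun q hq => hs.1 _ ?_⟩
  exact List.mem_map_of_mem hq

lemma one_mem_spanS (c : Fin n) : (1 : An n Γ) ∈ spanS n Γ c :=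
  Submodule.subset_span ⟨[], by simp [Srt], by simp, rfl⟩

/-- prepend a generator with small first index -/
lemma prepend (c i j : Fin n) (hci : c ≤ i) (hij : i < j) (δ : Γ) {x : An n Γ}
    (hx : x ∈ spanS n Γ i) : gg n Γ ⟨(i, j, δ), hij⟩ * x ∈ spanS n Γ c := by
  induction hx using Submodule.span_induction with
  | mem y hy =>
    obtain ⟨M, hs, hall, rfl⟩ := hy
    refine Submodule.subset_span ⟨⟨(i, j, δ), hij⟩ :: M, srt_cons (fun q hq => hall q hq) hs,
      ?_, (listProd_cons _ _).symm⟩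
    intro q hq
    rcases List.mem_cons.mp hq with rfl | hq
    · exact hci
    · exact le_trans hci (hall q hq)
  | zero => rw [mul_zero]; exact Submodule.zero_mem _
  | add x y _ _ hx hy => rw [mul_add]; exact Submodule.add_mem _ hx hy
  | smul r x _ hx => rw [mul_smul_comm]; exact Submodule.smul_mem _ r hx

lemma swapA' (i a b : Fin n) (δ γ : Γ) (hia : i < a) (hab : a < b) (hib : i < b) :
    gg n Γ ⟨(a, b, γ), hab⟩ * gg n Γ ⟨(i, a, δ), hia⟩ =
      gg n Γ ⟨(i, a, δ), hia⟩ * gg n Γ ⟨(a, b, γ), hab⟩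
        + gg n Γ ⟨(i, a, δ), hia⟩ * gg n Γ ⟨(i, b, δ * γ), hib⟩
        - gg n Γ ⟨(i, b, δ * γ), hib⟩ * gg n Γ ⟨(i, a, δ), hia⟩ :=
  swapA i a b δ γ hia.ne hab.ne hib.ne

lemma swapB' (i a j : Fin n) (γ δ : Γ) (hia : i < a) (haj : a < j) (hij : i < j) :
    gg n Γ ⟨(a, j, γ), haj⟩ * gg n Γ ⟨(i, j, δ), hij⟩ =
      gg n Γ ⟨(i, j, δ), hij⟩ * gg n Γ ⟨(a, j, γ), haj⟩
        + gg n Γ ⟨(i, a, δ * γ⁻¹), hia⟩ * gg n Γ ⟨(a, j, γ), haj⟩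
        - gg n Γ ⟨(a, j, γ), haj⟩ * gg n Γ ⟨(i, a, δ * γ⁻¹), hia⟩ :=
  swapB i a j γ δ hia.ne haj.ne hij.ne

lemma comm' (i j a b : Fin n) (δ γ : Γ) (hij : i < j) (hab : a < b)
    (h1 : a ≠ i) (h2 : a ≠ j) (h3 : b ≠ i) (h4 : b ≠ j) :
    gg n Γ ⟨(a, b, γ), hab⟩ * gg n Γ ⟨(i, j, δ), hij⟩ =
      gg n Γ ⟨(i, j, δ), hij⟩ * gg n Γ ⟨(a, b, γ), hab⟩ :=
  rel1 a b i j γ δ hab.ne hij.ne h1 h2 h3 h4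

def jh : List (Pa n Γ) → ℕ
  | [] => 0
  | p :: _ => p.val.2.1.val

lemma jh_lt (L : List (Pa n Γ)) (hn : 0 < n) : jh L < n := by
  cases L with
  | nil => exact hn
  | cons p _ => exact p.val.2.1.isLt

lemma measure_aux {a j m : ℕ} (ha : a < m) (hj : j < m) : a * m + j < m * m := by
  calc a * m + j < a * m + m := by omega
    _ = (a + 1) * m := by ring
    _ ≤ m * m := Nat.mul_le_mul_right _ ha

end St9

namespace St9

variable {n : ℕ} {Γ : Type*} [Group Γ]

lemma key : ∀ (N : ℕ) (c a b : Fin n) (γ : Γ) (hab : a < b) (_hca : c ≤ a)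
    (L : List (Pa n Γ)), Srt n Γ L → (∀ q ∈ L, c ≤ q.val.1) →
    L.length * (n * n) + a.val * n + jh L < N →
    gg n Γ ⟨(a, b, γ), hab⟩ * listProd n Γ L ∈ spanS n Γ c := by
  intro N
  induction N with
  | zero => intro c a b γ hab hca L hs hall hm; omega
  | succ N IH =>
    intro c a b γ hab hca L hs hall hm
    match L with
    | [] =>
      rw [listProd_nil, mul_one]
      refine Submodule.subset_span ⟨[⟨(a, b, γ), hab⟩], by simp [Srt], ?_, by simp [listProd]⟩
      intro q hq
      rcases List.mem_cons.mp hq with rfl | hq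
      · exact hca
      · simp at hq
    | ⟨(i, j, δ), hij⟩ :: rest =>
      have hrest := srt_tail hs
      have hrest_s : Srt n Γ rest := hrest.1
      have hrest_i : ∀ q ∈ rest, i ≤ q.val.1 := hrest.2
      have hci : c ≤ i := hall _ List.mem_cons_self
      have hrest_c : ∀ q ∈ rest, c ≤ q.val.1 := fun q hq => hall q (List.mem_cons_of_mem _ hq)
      have hnpos : 0 < n := a.pos
      have hmexp : (rest.length + 1) * (n * n) = rest.length * (n * n) + n * n := by ring
      have hm' : rest.length * (n * n) + n * n + (a.val * n + j.val) < N + 1 := by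
        have : (⟨(i, j, δ), hij⟩ :: rest : List (Pa n Γ)).length = rest.length + 1 := by simp
        rw [this] at hm
        have hjh : jh (⟨(i, j, δ), hij⟩ :: rest : List (Pa n Γ)) = j.val := rfl
        rw [hjh, hmexp] at hm
        omega
      rw [listProd_cons]
      by_cases hai : a ≤ i
      · -- direct prepend
        rw [← mul_assoc]
        have : gg n Γ ⟨(a, b, γ), hab⟩ * gg n Γ ⟨(i, j, δ), hij⟩ * listProd n Γ rest
            = listProd n Γ (⟨(a, b, γ), hab⟩ :: ⟨(i, j, δ), hij⟩ :: rest) := by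
          rw [listProd_cons, listProd_cons, mul_assoc]
        rw [this]
        refine Submodule.subset_span ⟨_, ?_, ?_, rfl⟩
        · refine srt_cons ?_ hs
          intro q hq
          rcases List.mem_cons.mp hq with rfl | hq
          · exact hai
          · exact le_trans hai (hrest_i q hq)
        · intro q hq
          rcases List.mem_cons.mp hq with rfl | hq
          · exact hca
          · exact hall q hq
      · push_neg at hai  -- i < a
        rcases eq_or_ne a j with rfl | haj
        · -- case a = j : use swapA'
          have hib : i < b := lt_trans hai hab
          rw [← mul_assoc, swapA' i a b δ γ hai hab hib, sub_mul, add_mul,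
            mul_assoc, mul_assoc, mul_assoc]
          refine Submodule.sub_mem _ (Submodule.add_mem _ ?_ ?_) ?_
          · -- t_{i,a} * (t_{a,b} * P)
            refine prepend c i a hci hai δ (IH i a b γ hab hai.le rest hrest_s hrest_i ?_)
            have h1 : a.val * n + jh rest < n * n :=
              measure_aux a.isLt (jh_lt rest hnpos)
            omega
          · -- t_{i,a} * (t_{i,b} * P)
            refine prepend c i a hci hai δ (IH i i b (δ * γ) hib le_rfl rest hrest_s hrest_i ?_)
            have h1 : i.val * n + jh rest < n * n :=
              measure_aux i.isLt (jh_lt rest hnpos)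
            omega
          · -- t_{i,b} * (t_{i,a} * P)  : directly sorted
            have : gg n Γ ⟨(i, b, δ * γ), hib⟩ * (gg n Γ ⟨(i, a, δ), hai⟩ * listProd n Γ rest)
                = listProd n Γ (⟨(i, b, δ * γ), hib⟩ :: ⟨(i, a, δ), hai⟩ :: rest) := by
              rw [listProd_cons, listProd_cons]
            rw [this]
            refine Submodule.subset_span ⟨_, ?_, ?_, rfl⟩
            · refine srt_cons ?_ (srt_cons hrest_i hrest_s)
              intro q hq
              rcases List.mem_cons.mp hq with rfl | hq
              · exact le_rfl
              · exact hrest_i q hq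
            · intro q hq
              rcases List.mem_cons.mp hq with rfl | hq
              · exact hci
              · rcases List.mem_cons.mp hq with rfl | hq
                · exact hci
                · exact hrest_c q hq
        · -- a ≠ j
          rcases eq_or_ne b j with rfl | hbj
          · -- case b = j : use swapB'
            have hiaj : i < a := hai
            rw [← mul_assoc, swapB' i a b γ δ hai hab hij, sub_mul, add_mul,
              mul_assoc, mul_assoc, mul_assoc]
            refine Submodule.sub_mem _ (Submodule.add_mem _ ?_ ?_) ?_
            · refine prepend c i b hci hij δ (IH i a b γ hab hai.le rest hrest_s hrest_i ?_)
              have h1 : a.val * n + jh rest < n * n :=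
                measure_aux a.isLt (jh_lt rest hnpos)
              omega
            · refine prepend c i a hci hai (δ * γ⁻¹)
                (IH i a b γ hab hai.le rest hrest_s hrest_i ?_)
              have h1 : a.val * n + jh rest < n * n :=
                measure_aux a.isLt (jh_lt rest hnpos)
              omega
            · -- t_{a,b} * listProd ((i,a)::rest) : recursion with smaller head-j
              have hcons : gg n Γ ⟨(i, a, δ * γ⁻¹), hai⟩ * listProd n Γ rest
                  = listProd n Γ (⟨(i, a, δ * γ⁻¹), hai⟩ :: rest) := (listProd_cons _ _).symm
              rw [hcons]
              refine IH c a b γ hab hca _ (srt_cons hrest_i hrest_s) ?_ ?_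
              · intro q hq
                rcases List.mem_cons.mp hq with rfl | hq
                · exact hci
                · exact hrest_c q hq
              · have hlen : (⟨(i, a, δ * γ⁻¹), hai⟩ :: rest : List (Pa n Γ)).length
                    = rest.length + 1 := by simp
                have hjh : jh (⟨(i, a, δ * γ⁻¹), hai⟩ :: rest : List (Pa n Γ)) = a.val := rfl
                rw [hlen, hjh, hmexp]
                have : a.val < b.val := hab
                omega
          · -- disjoint : commute
            have h3 : b ≠ i := (lt_trans hai hab).ne'
            rw [← mul_assoc, comm' i j a b δ γ hij hab hai.ne' haj h3 hbj, mul_assoc]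
            refine prepend c i j hci hij δ (IH i a b γ hab hai.le rest hrest_s hrest_i ?_)
            have h1 : a.val * n + jh rest < n * n :=
              measure_aux a.isLt (jh_lt rest hnpos)
            omega

end St9

namespace St9

variable {n : ℕ} {Γ : Type*} [Group Γ]

lemma mul_gen_mem_lt (hpos : 0 < n) (i j : Fin n) (hij : i < j) (γ : Γ) {x : An n Γ}
    (hx : x ∈ spanS n Γ ⟨0, hpos⟩) : gg n Γ ⟨(i, j, γ), hij⟩ * x ∈ spanS n Γ ⟨0, hpos⟩ := by
  induction hx using Submodule.span_induction with
  | mem y hy =>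
    obtain ⟨M, hs, hall, rfl⟩ := hy
    exact key (M.length * (n * n) + i.val * n + jh M + 1) ⟨0, hpos⟩ i j γ hij
      (by simp [Fin.le_def]) M hs (fun q _ => by simp [Fin.le_def]) (Nat.lt_succ_self _)
  | zero => rw [mul_zero]; exact Submodule.zero_mem _
  | add x y _ _ hx hy => rw [mul_add]; exact Submodule.add_mem _ hx hy
  | smul r x _ hx => rw [mul_smul_comm]; exact Submodule.smul_mem _ r hx

lemma listProd_mul_mem (hpos : 0 < n) (M : List (Pa n Γ)) {y : An n Γ}
    (hy : y ∈ spanS n Γ ⟨0, hpos⟩) : listProd n Γ M * y ∈ spanS n Γ ⟨0, hpos⟩ := by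
  induction M with
  | nil => simpa [listProd] using hy
  | cons p rest ih =>
    obtain ⟨⟨i, j, γ⟩, hij⟩ := p
    rw [listProd_cons, mul_assoc]
    exact mul_gen_mem_lt hpos i j hij γ ih

lemma mul_mem' (hpos : 0 < n) {x y : An n Γ} (hx : x ∈ spanS n Γ ⟨0, hpos⟩)
    (hy : y ∈ spanS n Γ ⟨0, hpos⟩) : x * y ∈ spanS n Γ ⟨0, hpos⟩ := by
  induction hx using Submodule.span_induction with
  | mem z hz =>
    obtain ⟨M, hs, hall, rfl⟩ := hz
    exact listProd_mul_mem hpos M hy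
  | zero => rw [zero_mul]; exact Submodule.zero_mem _
  | add x₁ x₂ _ _ h1 h2 => rw [add_mul]; exact Submodule.add_mem _ h1 h2
  | smul r x₁ _ h1 => rw [smul_mul_assoc]; exact Submodule.smul_mem _ r h1

lemma all_mem (hpos : 0 < n) (x : An n Γ) : x ∈ spanS n Γ ⟨0, hpos⟩ := by
  obtain ⟨y, rfl⟩ := RingQuot.mkAlgHom_surjective ℤ (ARel n Γ) x
  induction y using FreeAlgebra.induction with
  | grade0 r =>
    rw [AlgHom.commutes, Algebra.algebraMap_eq_smul_one]
    exact Submodule.smul_mem _ r (one_mem_spanS _)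
  | grade1 p =>
    obtain ⟨⟨i, j, γ⟩, hne⟩ := p
    have hgoal : RingQuot.mkAlgHom ℤ (ARel n Γ) (FreeAlgebra.ι ℤ ⟨(i, j, γ), hne⟩)
        = tA n Γ i j γ hne := rfl
    rw [hgoal]
    rcases hne.lt_or_gt with h | h
    · refine Submodule.subset_span ⟨[⟨(i, j, γ), h⟩], by simp [Srt], by simp [Fin.le_def], ?_⟩
      simp [listProd, gg]
    · rw [rel0 i j γ hne]
      refine Submodule.subset_span ⟨[⟨(j, i, γ⁻¹), h⟩], by simp [Srt], by simp [Fin.le_def], ?_⟩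
      simp [listProd, gg]
  | mul a b ha hb => rw [map_mul]; exact mul_mem' hpos ha hb
  | add a b ha hb => rw [map_add]; exact Submodule.add_mem _ ha hb

end St9


open St9 in
/-- The `ℤ`-algebra `A_n(Γ)` is spanned as a `ℤ`-module by the monomials
`t_{i₁,j₁,γ₁} ⋯ t_{i_d,j_d,γ_d}` with `i_k < j_k` for all `k` and `i₁ ≤ i₂ ≤ ⋯ ≤ i_d`
(the empty product, `d = 0`, being `1`). -/
theorem statement9 (Γ : Type*) [Group Γ] (n : ℕ) (hn : 2 ≤ n) :
    Submodule.span ℤ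
      {x : An n Γ | ∃ (d : ℕ) (i j : Fin d → Fin n) (γ : Fin d → Γ)
        (hij : ∀ k, i k < j k), Monotone i ∧
        x = (List.ofFn fun k : Fin d => tA n Γ (i k) (j k) (γ k) (hij k).ne).prod} = ⊤ := by
  have hpos : 0 < n := by omega
  rw [eq_top_iff]
  intro x _
  have hx := all_mem hpos x
  refine Submodule.span_le.mpr ?_ hx
  rintro z ⟨M, hs, -, rfl⟩
  apply Submodule.subset_span
  refine ⟨M.length, fun k => (M.get k).val.1, fun k => (M.get k).val.2.1,
    fun k => (M.get k).val.2.2, fun k => (M.get k).prop, ?_, ?_⟩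
  · -- Monotone
    intro k l hkl
    rcases eq_or_lt_of_le hkl with h | h
    · rw [h]
    · have hp := List.pairwise_iff_getElem.mp
        (hs : List.Pairwise (· ≤ ·) (M.map (fun p : Pa n Γ => p.val.1)))
      have hk : k.val < (M.map (fun p : Pa n Γ => p.val.1)).length := by
        simp [k.isLt]
      have hl : l.val < (M.map (fun p : Pa n Γ => p.val.1)).length := by
        simp [l.isLt]
      have := hp k.val l.val hk hl h
      simpa using this
  · -- product equality
    show listProd n Γ M = _
    rw [listProd, ← List.ofFn_getElem_eq_map]
    congr 1
end
end

section
/- Fix a group Γ and an integer n ≥ 2, and let H_n(Γ) = Γ^n ⋊ Σ_n be the semidirect product of the n-fold direct power Γ^n with the symmetric group Σ_n on n letters, where Σ_n acts on Γ^n by permuting the coordinates. Then there is an action of H_n(Γ) on the ℤ-algebra A_n(Γ) by ℤ-algebra automorphisms such that: (i) each permutation s ∈ Σ_n sends t_{i,j,γ} to t_{s(i),s(j),γ}; (ii) for μ ∈ Γ, the n-tuple μ(m) ∈ Γ^n having μ in the m-th coordinate and 1 elsewhere sends t_{i,j,γ} to t_{i,j,γ} whenever m ∉ {i,j}, and μ(i)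 sends t_{i,j,γ} to t_{i,j,μγ} (consequently μ(j) sends t_{i,j,γ} to t_{i,j,γμ⁻¹}). -/
noncomputable section

/-- The action of the symmetric group `Σ_n` on `Γ^n` permuting the coordinates:
`(s • μ) i = μ (s⁻¹ i)`. -/
def permAct (n : ℕ) (Γ : Type*) [Group Γ] :
    Equiv.Perm (Fin n) →* MulAut (Fin n → Γ) where
  toFun s :=
    { toFun := fun μ => μ ∘ s.symm
      invFun := fun μ => μ ∘ s
      left_inv := fun μ => by ext x; simp
      right_inv := fun μ => by ext x; simp
      map_mul' := fun μ ν => rfl }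
  map_one' := by
    apply MulEquiv.ext
    intro μ
    funext x
    rfl
  map_mul' := fun s t => by
    apply MulEquiv.ext
    intro μ
    funext x
    rfl

section Aux

variable {n : ℕ} {Γ : Type*} [Group Γ]

lemma tA_congr {i i' j j' : Fin n} {γ γ' : Γ} (hi : i = i') (hj : j = j') (hγ : γ = γ')
    (h : i ≠ j) (h' : i' ≠ j') : tA n Γ i j γ h = tA n Γ i' j' γ' h' := by
  subst hi; subst hj; subst hγ; rfl

lemma tA_inv (i j : Fin n) (γ : Γ) (h : i ≠ j) :
    tA n Γ i j γ h = tA n Γ j i γ⁻¹ h.symm :=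
  RingQuot.mkAlgHom_rel ℤ (ARel.inv i j γ h)

lemma tA_comm (i j k l : Fin n) (γ δ : Γ) (hij : i ≠ j) (hkl : k ≠ l)
    (h1 : i ≠ k) (h2 : i ≠ l) (h3 : j ≠ k) (h4 : j ≠ l) :
    tA n Γ i j γ hij * tA n Γ k l δ hkl = tA n Γ k l δ hkl * tA n Γ i j γ hij := by
  simpa [tA, map_mul] using
    RingQuot.mkAlgHom_rel ℤ (ARel.comm i j k l γ δ hij hkl h1 h2 h3 h4)

lemma tA_inf (i j k : Fin n) (γ δ : Γ) (hij : i ≠ j) (hjk : j ≠ k) (hik : i ≠ k) :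
    tA n Γ i j γ hij * (tA n Γ j k δ hjk + tA n Γ i k (γ * δ) hik) =
      (tA n Γ j k δ hjk + tA n Γ i k (γ * δ) hik) * tA n Γ i j γ hij := by
  simpa [tA, map_mul, map_add] using
    RingQuot.mkAlgHom_rel ℤ (ARel.inf i j k γ δ hij hjk hik)

lemma lift_faGen (f : Idx n Γ → An n Γ) (i j : Fin n) (γ : Γ) (h : i ≠ j) :
    FreeAlgebra.lift ℤ f (faGen n Γ i j γ h) = f ⟨(i, j, γ), h⟩ :=
  FreeAlgebra.lift_ι_apply _ _

variable (n Γ) in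
/-- The algebra endomorphism of `A_n(Γ)` given by an element of `H_n(Γ)`. -/
def psiFun (g : (Fin n → Γ) ⋊[permAct n Γ] Equiv.Perm (Fin n)) :
    An n Γ →ₐ[ℤ] An n Γ :=
  RingQuot.liftAlgHom ℤ (s := ARel n Γ)
    ⟨FreeAlgebra.lift ℤ fun p =>
        tA n Γ (g.right p.1.1) (g.right p.1.2.1)
          (g.left (g.right p.1.1) * p.1.2.2 * (g.left (g.right p.1.2.1))⁻¹)
          (fun e => p.2 (g.right.injective e)), by
      intro a b hab
      induction hab with
      | inv i j γ h =>
          simp only [lift_faGen]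
          rw [tA_inv]
          congr 1
          group
      | comm i j k l γ δ hij hkl h1 h2 h3 h4 =>
          simp only [map_mul, lift_faGen]
          exact tA_comm _ _ _ _ _ _ _ _
            (fun e => h1 (g.right.injective e)) (fun e => h2 (g.right.injective e))
            (fun e => h3 (g.right.injective e)) (fun e => h4 (g.right.injective e))
      | inf i j k γ δ hij hjk hik =>
          simp only [map_mul, map_add, lift_faGen]
          have key := tA_inf (g.right i) (g.right j) (g.right k)
            (g.left (g.right i) * γ * (g.left (g.right j))⁻¹)
            (g.left (g.right j) * δ * (g.left (g.right k))⁻¹)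
            (fun e => hij (g.right.injective e)) (fun e => hjk (g.right.injective e))
            (fun e => hik (g.right.injective e))
          have hγδ : g.left (g.right i) * γ * (g.left (g.right j))⁻¹ *
              (g.left (g.right j) * δ * (g.left (g.right k))⁻¹) =
              g.left (g.right i) * (γ * δ) * (g.left (g.right k))⁻¹ := by group
          rw [hγδ] at key
          exact key⟩

lemma psiFun_tA (g : (Fin n → Γ) ⋊[permAct n Γ] Equiv.Perm (Fin n))
    (i j : Fin n) (γ : Γ) (h : i ≠ j) :
    psiFun n Γ g (tA n Γ i j γ h) =
      tA n Γ (g.right i) (g.right j)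
        (g.left (g.right i) * γ * (g.left (g.right j))⁻¹)
        (fun e => h (g.right.injective e)) := by
  simp [psiFun, tA, RingQuot.liftAlgHom_mkAlgHom_apply, lift_faGen]

lemma psiFun_ext {f₁ f₂ : An n Γ →ₐ[ℤ] An n Γ}
    (h : ∀ (i j : Fin n) (γ : Γ) (hij : i ≠ j),
      f₁ (tA n Γ i j γ hij) = f₂ (tA n Γ i j γ hij)) : f₁ = f₂ := by
  ext p
  have := h p.1.1 p.1.2.1 p.1.2.2 p.2
  exact this

lemma psiFun_one : psiFun n Γ 1 = AlgHom.id ℤ (An n Γ) := by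
  apply psiFun_ext
  intro i j γ hij
  rw [psiFun_tA]
  simp

lemma psiFun_mul (g h : (Fin n → Γ) ⋊[permAct n Γ] Equiv.Perm (Fin n)) :
    psiFun n Γ (g * h) = (psiFun n Γ g).comp (psiFun n Γ h) := by
  apply psiFun_ext
  intro i j γ hij
  simp only [AlgHom.comp_apply, psiFun_tA]
  have hr : ∀ x : Fin n, (g * h).right x = g.right (h.right x) := fun x => rfl
  have hl : ∀ x : Fin n, (g * h).left x = g.left x * h.left (g.right⁻¹ x) := fun x => rfl
  refine tA_congr (hr i) (hr j) ?_ _ _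
  rw [hl, hl, hr, hr]
  simp only [Equiv.Perm.inv_def, Equiv.symm_apply_apply]
  group

variable (n Γ) in
/-- The monoid hom packaging. -/
def Psi : ((Fin n → Γ) ⋊[permAct n Γ] Equiv.Perm (Fin n)) →* (An n Γ ≃ₐ[ℤ] An n Γ) where
  toFun g := AlgEquiv.ofAlgHom (psiFun n Γ g) (psiFun n Γ g⁻¹)
    (by rw [← psiFun_mul, mul_inv_cancel, psiFun_one])
    (by rw [← psiFun_mul, inv_mul_cancel, psiFun_one])
  map_one' := by
    apply AlgEquiv.ext; intro x
    show psiFun n Γ 1 x = x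
    rw [psiFun_one]; rfl
  map_mul' g h := by
    apply AlgEquiv.ext; intro x
    show psiFun n Γ (g * h) x = psiFun n Γ g (psiFun n Γ h x)
    rw [psiFun_mul]; rfl

lemma Psi_apply (g : (Fin n → Γ) ⋊[permAct n Γ] Equiv.Perm (Fin n)) (x : An n Γ) :
    Psi n Γ g x = psiFun n Γ g x := rfl

end Aux

/-- The group `H_n(Γ) = Γⁿ ⋊ Σ_n` acts on `A_n(Γ)` by `ℤ`-algebra
automorphisms so that a permutation `s` sends `t_{i,j,γ}` to `t_{s(i),s(j),γ}`, the tuple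
`μ(m)` (with `μ` in coordinate `m` and `1` elsewhere) fixes `t_{i,j,γ}` when `m ∉ {i,j}`,
`μ(i)` sends `t_{i,j,γ}` to `t_{i,j,μγ}`, and (consequently) `μ(j)` sends `t_{i,j,γ}` to
`t_{i,j,γμ⁻¹}`. -/
theorem statement11 (Γ : Type*) [Group Γ] (n : ℕ) (hn : 2 ≤ n) :
    ∃ Ψ : (Fin n → Γ) ⋊[permAct n Γ] Equiv.Perm (Fin n) →* (An n Γ ≃ₐ[ℤ] An n Γ),
      (∀ (s : Equiv.Perm (Fin n)) (i j : Fin n) (h : i ≠ j) (γ : Γ),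
        Ψ (SemidirectProduct.inr s) (tA n Γ i j γ h) =
          tA n Γ (s i) (s j) γ (fun e => h (s.injective e))) ∧
      (∀ (μ : Γ) (m i j : Fin n) (h : i ≠ j), m ≠ i → m ≠ j → ∀ γ : Γ,
        Ψ (SemidirectProduct.inl (Pi.mulSingle m μ)) (tA n Γ i j γ h) = tA n Γ i j γ h) ∧
      (∀ (μ : Γ) (i j : Fin n) (h : i ≠ j) (γ : Γ),
        Ψ (SemidirectProduct.inl (Pi.mulSingle i μ)) (tA n Γ i j γ h) =
          tA n Γ i j (μ * γ) h) ∧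
      (∀ (μ : Γ) (i j : Fin n) (h : i ≠ j) (γ : Γ),
        Ψ (SemidirectProduct.inl (Pi.mulSingle j μ)) (tA n Γ i j γ h) =
          tA n Γ i j (γ * μ⁻¹) h) := by
  refine ⟨Psi n Γ, ?_, ?_, ?_, ?_⟩
  · intro s i j h γ
    rw [Psi_apply]
    show psiFun n Γ (SemidirectProduct.inr s) _ = _
    rw [psiFun_tA]
    simp
  · intro μ m i j h hmi hmj γ
    rw [Psi_apply]
    show psiFun n Γ (SemidirectProduct.inl (Pi.mulSingle m μ)) _ = _
    rw [psiFun_tA]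
    simp [Pi.mulSingle_eq_of_ne' hmi, Pi.mulSingle_eq_of_ne' hmj]
  · intro μ i j h γ
    rw [Psi_apply]
    show psiFun n Γ (SemidirectProduct.inl (Pi.mulSingle i μ)) _ = _
    rw [psiFun_tA]
    refine tA_congr rfl rfl ?_ _ _
    simp [Pi.mulSingle_eq_of_ne h.symm, mul_assoc]
  · intro μ i j h γ
    rw [Psi_apply]
    show psiFun n Γ (SemidirectProduct.inl (Pi.mulSingle j μ)) _ = _
    rw [psiFun_tA]
    refine tA_congr rfl rfl ?_ _ _
    simp [Pi.mulSingle_eq_of_ne h]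
end
end
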